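/- With c_l as in the partial fraction decomposition of G(z) = 1/((1-z^{a_1})⋯(1-z^{a_n})) at z = 1, the polynomial part satisfies P_A(t) = Σ_{l=1}^{n} c_l * binomial(t+l-1, l-1) = res( U(z) / (1-z)^{t+1} ), where U(z) = G(1-z). -/

import Mathlib

open PowerSeries
open scoped nonZeroDivisors

noncomputable def psiPP : Polynomial ℚ →+* PowerSeries ℚ :=
  (Polynomial.aeval (1 - PowerSeries.X : PowerSeries ℚ)).toRingHom

lemma psiPP_eq (p : Polynomial ℚ) :
    psiPP p = ((p.comp (1 - Polynomial.X) : Polynomial ℚ) : PowerSeries ℚ) := by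
  have h := Polynomial.aeval_algHom_apply
    (Polynomial.coeToPowerSeries.algHom (A := ℚ) (R := ℚ)) (1 - Polynomial.X) p
  simp only [Polynomial.coeToPowerSeries.algHom_apply, Polynomial.coe_sub, Polynomial.coe_one,
    Polynomial.coe_X, Polynomial.algebraMap_eq, map_id] at h
  rw [psiPP, AlgHom.toRingHom_eq_coe, RingHom.coe_coe]
  rw [← Polynomial.comp_eq_aeval] at h
  simpa [PowerSeries.map_id] using h

lemma psiPP_inj : Function.Injective psiPP := by
  intro p q h
  rw [psiPP_eq, psiPP_eq, Polynomial.coe_inj] at h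
  have h3 := congrArg (fun r : Polynomial ℚ => Polynomial.comp r (1 - Polynomial.X)) h
  simpa [Polynomial.comp_assoc, Polynomial.sub_comp, Polynomial.one_comp, Polynomial.X_comp,
    sub_sub_cancel, Polynomial.comp_X] using h3

noncomputable def PhiPP : Polynomial ℚ →+* LaurentSeries ℚ :=
  (HahnSeries.ofPowerSeries ℤ ℚ).comp psiPP

lemma PhiPP_inj : Function.Injective PhiPP :=
  (HahnSeries.ofPowerSeries_injective).comp psiPP_inj

lemma PhiPP_cond : (Polynomial ℚ)⁰ ≤ (LaurentSeries ℚ)⁰.comap PhiPP := by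
  intro p hp
  rw [Submonoid.mem_comap]
  rw [mem_nonZeroDivisors_iff_ne_zero] at hp ⊢
  exact fun h => hp (PhiPP_inj (by simpa using h))

noncomputable def phiPP : RatFunc ℚ →+* LaurentSeries ℚ :=
  RatFunc.liftRingHom PhiPP PhiPP_cond

lemma phiPP_algebraMap (p : Polynomial ℚ) :
    phiPP (algebraMap (Polynomial ℚ) (RatFunc ℚ) p) = PhiPP p := by
  have := RatFunc.liftRingHom_apply_div PhiPP PhiPP_cond p 1
  rw [map_one, map_one, div_one, div_one] at this
  exact this

lemma phiPP_X : phiPP RatFunc.X = ((1 - PowerSeries.X : PowerSeries ℚ) : LaurentSeries ℚ) := by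
  rw [← RatFunc.algebraMap_X, phiPP_algebraMap, PhiPP, RingHom.comp_apply]
  congr 1
  rw [psiPP, AlgHom.toRingHom_eq_coe, RingHom.coe_coe, Polynomial.aeval_X]

lemma phiPP_C (q : ℚ) : phiPP (RatFunc.C q) = ((PowerSeries.C q : PowerSeries ℚ) : LaurentSeries ℚ) := by
  rw [← RatFunc.algebraMap_C, phiPP_algebraMap, PhiPP, RingHom.comp_apply]
  congr 1
  rw [psiPP, AlgHom.toRingHom_eq_coe, RingHom.coe_coe, Polynomial.aeval_C]
  rfl

lemma psiPP_constantCoeff (p : Polynomial ℚ) :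
    PowerSeries.constantCoeff (psiPP p) = p.eval 1 := by
  rw [psiPP_eq, Polynomial.constantCoeff_coe]
  rw [Polynomial.coeff_zero_eq_eval_zero, Polynomial.eval_comp]
  simp

lemma coe_coeff_neg (x : PowerSeries ℚ) (i : ℤ) (hi : i < 0) :
    ((x : LaurentSeries ℚ)).coeff i = 0 := by
  rw [HahnSeries.ofPowerSeries_apply]
  apply HahnSeries.embDomain_notin_range
  rintro ⟨m, hm⟩
  simp only [Nat.castOrderEmbedding_apply] at hm
  omega

lemma phiPP_coe_of_denom (R : RatFunc ℚ) (hR : Polynomial.eval 1 R.denom ≠ 0) :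
    phiPP R = ((psiPP R.num * (psiPP R.denom)⁻¹ : PowerSeries ℚ) : LaurentSeries ℚ) := by
  have hden : PowerSeries.constantCoeff (psiPP R.denom) ≠ 0 := by
    rw [psiPP_constantCoeff]; exact hR
  have hL : ((psiPP R.denom : PowerSeries ℚ) : LaurentSeries ℚ) ≠ 0 := by
    intro h
    rw [← PowerSeries.coe_zero] at h
    exact hden (by rw [HahnSeries.ofPowerSeries_injective h]; simp)
  rw [phiPP, RatFunc.liftRingHom_apply, PhiPP, RingHom.comp_apply, RingHom.comp_apply]
  rw [div_eq_iff hL, PowerSeries.coe_mul, mul_assoc, ← PowerSeries.coe_mul,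
    PowerSeries.inv_mul_cancel _ hden, PowerSeries.coe_one, mul_one]

noncomputable def laurentCoeffHom (g : ℤ) : LaurentSeries ℚ →+ ℚ where
  toFun x := x.coeff g
  map_zero' := HahnSeries.coeff_zero
  map_add' _ _ := HahnSeries.coeff_add

@[simp] lemma laurentCoeffHom_apply (g : ℤ) (x : LaurentSeries ℚ) :
    laurentCoeffHom g x = x.coeff g := rfl

/-- With `c_l` as in the partial fraction decomposition of `G(z) = 1/∏(1 - z^{a_i})` at
`z = 1`, the polynomial part `P_A(t)` (defined by `∑_t P_A(t) z^t = ∑_l c_l/(1-z)^l`)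
satisfies `P_A(t) = ∑_{l=1}^n c_l binom(t+l-1, l-1) = res(U(z)/(1-z)^{t+1})`,
where `U(z) = G(1-z)`. -/
theorem polynomialPart_eq_binomial_sum_eq_residue (n : ℕ) (a : Fin n → ℕ) (ha : ∀ i, 0 < a i)
    (c : ℕ → ℚ) (R : RatFunc ℚ)
    (hG : (∏ i, (1 - RatFunc.X ^ (a i)) : RatFunc ℚ)⁻¹ =
      (∑ l ∈ Finset.Icc 1 n, RatFunc.C (c l) / (1 - RatFunc.X) ^ l) + R)
    (hR : Polynomial.eval 1 R.denom ≠ 0)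
    (t : ℕ) :
    PowerSeries.coeff t
        (∑ l ∈ Finset.Icc 1 n, PowerSeries.C (c l) * ((1 - PowerSeries.X) ^ l)⁻¹) =
      ∑ l ∈ Finset.Icc 1 n, c l * ((t + l - 1).choose (l - 1) : ℚ) ∧
    PowerSeries.coeff t
        (∑ l ∈ Finset.Icc 1 n, PowerSeries.C (c l) * ((1 - PowerSeries.X) ^ l)⁻¹) =
      (((∏ i, (1 - (1 - PowerSeries.X) ^ (a i)) : PowerSeries ℚ) : LaurentSeries ℚ)⁻¹ *
        (((1 - PowerSeries.X : PowerSeries ℚ) ^ (t + 1) : PowerSeries ℚ) :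
          LaurentSeries ℚ)⁻¹).coeff (-1) := by
  have hpart1 : PowerSeries.coeff t
      (∑ l ∈ Finset.Icc 1 n, PowerSeries.C (c l) * ((1 - PowerSeries.X) ^ l)⁻¹) =
      ∑ l ∈ Finset.Icc 1 n, c l * ((t + l - 1).choose (l - 1) : ℚ) := by
    rw [map_sum]
    refine Finset.sum_congr rfl fun l hl => ?_
    have hl1 : 1 ≤ l := (Finset.mem_Icc.mp hl).1
    have hinv : ((1 - PowerSeries.X : PowerSeries ℚ) ^ l)⁻¹ = (invOneSubPow ℚ l).val := by
      rw [PowerSeries.inv_eq_iff_mul_eq_one (by simp)]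
      rw [← invOneSubPow_inv_eq_one_sub_pow ℚ l]
      exact (invOneSubPow ℚ l).val_inv
    rw [hinv, PowerSeries.coeff_C_mul,
      invOneSubPow_val_eq_mk_sub_one_add_choose_of_pos _ _ hl1, PowerSeries.coeff_mk]
    congr 3
    omega
  refine ⟨hpart1, ?_⟩
  rw [hpart1]
  set V : PowerSeries ℚ := (invOneSubPow ℚ (t + 1)).val with hVdef
  have hVcoe : ((((1 - PowerSeries.X : PowerSeries ℚ)) ^ (t+1) : PowerSeries ℚ) :
      LaurentSeries ℚ)⁻¹ = (V : LaurentSeries ℚ) := by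
    apply inv_eq_of_mul_eq_one_right
    rw [← PowerSeries.coe_mul,
      show ((1 - PowerSeries.X : PowerSeries ℚ)) ^ (t+1) * V = 1 from by
        rw [hVdef, ← invOneSubPow_inv_eq_one_sub_pow ℚ (t+1)]
        exact (invOneSubPow ℚ (t+1)).inv_val,
      PowerSeries.coe_one]
  have hprod : ((∏ i, (1 - (1 - PowerSeries.X) ^ (a i)) : PowerSeries ℚ) : LaurentSeries ℚ)
      = phiPP (∏ i, (1 - RatFunc.X ^ (a i))) := by
    rw [show ((↑(∏ i, (1 - (1 - PowerSeries.X) ^ (a i)) : PowerSeries ℚ)) : LaurentSeries ℚ)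
        = (HahnSeries.ofPowerSeries ℤ ℚ) (∏ i, (1 - (1 - PowerSeries.X) ^ (a i))) from rfl,
      map_prod, map_prod]
    refine Finset.prod_congr rfl fun i _ => ?_
    have h2 : phiPP (1 - RatFunc.X ^ a i)
        = 1 - (HahnSeries.ofPowerSeries ℤ ℚ) (1 - PowerSeries.X) ^ a i := by
      rw [map_sub, map_one, map_pow, phiPP_X]
    rw [h2, map_sub, map_one, map_pow]
  have hXmap : phiPP ((1 : RatFunc ℚ) - RatFunc.X) = HahnSeries.single (1:ℤ) (1:ℚ) := by
    rw [map_sub, map_one, phiPP_X, PowerSeries.coe_sub, PowerSeries.coe_one, PowerSeries.coe_X,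
      sub_sub_cancel]
  rw [hVcoe, hprod, ← map_inv₀, hG, map_add, map_sum, add_mul, HahnSeries.coeff_add,
    Finset.sum_mul]
  have hRzero : ((phiPP R * (V : LaurentSeries ℚ)).coeff (-1)) = 0 := by
    rw [phiPP_coe_of_denom R hR, ← PowerSeries.coe_mul]
    exact coe_coeff_neg _ _ (by norm_num)
  rw [hRzero, add_zero, ← laurentCoeffHom_apply, map_sum]
  refine Finset.sum_congr rfl fun l hl => ?_
  have hl1 : 1 ≤ l := (Finset.mem_Icc.mp hl).1
  rw [laurentCoeffHom_apply]
  have hterm : phiPP (RatFunc.C (c l) / (1 - RatFunc.X) ^ l)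
      = ((PowerSeries.C (c l) : PowerSeries ℚ) : LaurentSeries ℚ)
        * HahnSeries.single (-(l:ℤ)) (1:ℚ) := by
    rw [map_div₀, map_pow, hXmap, phiPP_C, div_eq_mul_inv]
    congr 1
    rw [show (HahnSeries.single (1:ℤ) (1:ℚ)) ^ l = HahnSeries.single ((l:ℤ)) (1:ℚ) from by
      rw [HahnSeries.single_pow]; simp]
    rw [HahnSeries.inv_single, inv_one]
  rw [hterm]
  have hre : (HahnSeries.ofPowerSeries ℤ ℚ) (PowerSeries.C (c l)) * HahnSeries.single (-(l:ℤ)) (1:ℚ)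
      * (HahnSeries.ofPowerSeries ℤ ℚ) V
      = HahnSeries.single (-(l:ℤ)) (1:ℚ) * (HahnSeries.ofPowerSeries ℤ ℚ) (PowerSeries.C (c l) * V) := by
    rw [map_mul]; ring
  rw [hre, show (-1 : ℤ) = ((l:ℤ) - 1) + (-(l:ℤ)) from by ring, HahnSeries.coeff_single_mul_add,
    one_mul, show ((l:ℤ) - 1) = ((l - 1 : ℕ) : ℤ) from by omega,
    LaurentSeries.coeff_coe_powerSeries, PowerSeries.coeff_C_mul, hVdef,
    invOneSubPow_val_succ_eq_mk_add_choose, PowerSeries.coeff_mk]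
  congr 1
  rw [show t + (l - 1) = t + l - 1 from by omega,
    ← Nat.choose_symm (by omega : t ≤ t + l - 1), show t + l - 1 - t = l - 1 from by omega]
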